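/- For every integer r ≥ 1, the number of functions f from {1,…,r} to {1,…,r} such that for every k ∈ {1,…,r} one has #{ j : f(j) ≤ k } ≥ k, equals (r+1)^{r−1}. -/

import Mathlib

namespace Stmt6Aux

/-- The cycle lemma: if `S` decreases by 1 every period `n`, there is a unique
starting point `c < n` from which all the next `n` values are below `S c`. -/
lemma cycle_lemma (n : ℕ) (hn : 0 < n) (S : ℕ → ℤ) (hS : ∀ k, S (k + n) = S k - 1) :
    ∃! c : ℕ, c < n ∧ ∀ t, 1 ≤ t → t ≤ n → S (c + t) < S c := by
  have hne : ((Finset.range n).filter fun k => ∀ m ∈ Finset.range n, S m ≤ S k).Nonempty := by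
    obtain ⟨k, hk, hmax⟩ := (Finset.range n).exists_max_image S ⟨0, Finset.mem_range.2 hn⟩
    exact ⟨k, Finset.mem_filter.2 ⟨hk, hmax⟩⟩
  set F := (Finset.range n).filter fun k => ∀ m ∈ Finset.range n, S m ≤ S k with hF
  set c := F.max' hne with hc
  have hcF : c ∈ F := F.max'_mem hne
  have hcn : c < n := Finset.mem_range.1 (Finset.mem_filter.1 hcF).1
  have hcmax : ∀ m ∈ Finset.range n, S m ≤ S c := (Finset.mem_filter.1 hcF).2
  have h2 : ∀ k, c < k → k < n → S k < S c := by
    intro k hck hkn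
    rcases lt_or_eq_of_le (hcmax k (Finset.mem_range.2 hkn)) with h | h
    · exact h
    · exfalso
      have hkF : k ∈ F := Finset.mem_filter.2
        ⟨Finset.mem_range.2 hkn, fun m hm => (hcmax m hm).trans_eq h.symm⟩
      have := F.le_max' k hkF
      omega
  have hex : ∀ t, 1 ≤ t → t ≤ n → S (c + t) < S c := by
    intro t h1 h2'
    rcases lt_or_ge (c + t) n with h | h
    · exact h2 (c + t) (by omega) h
    · have he : c + t = (c + t - n) + n := by omega
      rw [he, hS]
      have h3 : S (c + t - n) ≤ S c := hcmax _ (Finset.mem_range.2 (by omega))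
      omega
  refine ⟨c, ⟨hcn, hex⟩, ?_⟩
  rintro c' ⟨hc'n, hc'⟩
  by_contra hne'
  rcases lt_or_gt_of_ne hne' with h | h
  · -- c' < c
    have h1 := hc' (c - c') (by omega) (by omega)
    rw [show c' + (c - c') = c by omega] at h1
    have h2' := hcmax c' (Finset.mem_range.2 hc'n)
    omega
  · -- c < c'
    have h1 := hc' (c + n - c') (by omega) (by omega)
    rw [show c' + (c + n - c') = c + n by omega, hS] at h1
    have h2' := h2 c' h hc'n
    omega

variable {r : ℕ}

/-- Number of indices mapped to `z`. -/
def cnt (g : Fin r → ZMod (r + 1)) (z : ZMod (r + 1)) : ℕ :=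
  (Finset.univ.filter fun j => g j = z).card

lemma sum_cnt (g : Fin r → ZMod (r + 1)) : ∑ z : ZMod (r + 1), cnt g z = r := by
  unfold cnt
  rw [← Finset.card_eq_sum_card_fiberwise (fun j (_ : j ∈ Finset.univ) => Finset.mem_univ (g j))]
  simp

lemma range_to_univ (f : ZMod (r + 1) → ℕ) :
    ∑ i ∈ Finset.range (r + 1), f (i : ZMod (r + 1)) = ∑ z : ZMod (r + 1), f z := by
  refine Finset.sum_nbij' (fun i => ((i : ZMod (r + 1)))) (fun z => z.val) ?_ ?_ ?_ ?_ ?_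
  · intro a _; exact Finset.mem_univ _
  · intro z _; exact Finset.mem_range.2 (ZMod.val_lt z)
  · intro a ha; exact ZMod.val_cast_of_lt (Finset.mem_range.1 ha)
  · intro z _; exact ZMod.natCast_zmod_val z
  · intro a _; rfl

lemma sum_cnt_range (g : Fin r → ZMod (r + 1)) (w : ZMod (r + 1)) :
    ∑ i ∈ Finset.range (r + 1), cnt g (-(w + (i : ZMod (r + 1)) + 1)) = r := by
  rw [range_to_univ (fun z => cnt g (-(w + z + 1)))]
  have hinv : Function.Involutive (fun z : ZMod (r + 1) => -(w + z + 1)) := by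
    intro z; ring
  rw [show (∑ z : ZMod (r + 1), cnt g (-(w + z + 1)))
      = ∑ z : ZMod (r + 1), cnt g (hinv.toPerm _ z) from rfl]
  rw [Equiv.sum_comp (hinv.toPerm _) (cnt g)]
  exact sum_cnt g

/-- Partial sums for the cycle lemma. -/
def Sg (g : Fin r → ZMod (r + 1)) (t : ℕ) : ℤ :=
  ((∑ u ∈ Finset.range t, cnt g (-((u : ZMod (r + 1)) + 1)) : ℕ) : ℤ) - t

lemma Sg_shift (g : Fin r → ZMod (r + 1)) : ∀ k, Sg g (k + (r + 1)) = Sg g k - 1 := by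
  intro k
  have hkey : ∑ u ∈ Finset.Ico k (k + (r + 1)), cnt g (-((u : ZMod (r + 1)) + 1)) = r := by
    rw [Finset.sum_Ico_eq_sum_range]
    simp only [add_tsub_cancel_left]
    calc ∑ i ∈ Finset.range (r + 1), cnt g (-((↑(k + i) : ZMod (r + 1)) + 1))
        = ∑ i ∈ Finset.range (r + 1),
            cnt g (-((k : ZMod (r + 1)) + (i : ZMod (r + 1)) + 1)) := by
          apply Finset.sum_congr rfl
          intro i _
          congr 1
          push_cast
          ring
      _ = r := sum_cnt_range g _
  unfold Sg
  rw [Finset.range_eq_Ico,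
    ← Finset.sum_Ico_consecutive _ (Nat.zero_le k) (Nat.le_add_right k (r + 1)),
    ← Finset.range_eq_Ico, hkey]
  push_cast
  ring

lemma cnt_val (h : Fin r → ZMod (r + 1)) (i : ℕ) (hi : i < r + 1) :
    cnt h (i : ZMod (r + 1)) = (Finset.univ.filter fun j => (h j).val = i).card := by
  unfold cnt
  congr 1
  ext j
  simp only [Finset.mem_filter, Finset.mem_univ, true_and]
  constructor
  · intro hj; rw [hj, ZMod.val_cast_of_lt hi]
  · intro hj
    apply ZMod.val_injective
    rw [hj, ZMod.val_cast_of_lt hi]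

lemma filter_val_ge (h : Fin r → ZMod (r + 1)) (k : ℕ) :
    (Finset.univ.filter fun j => k ≤ (h j).val).card
      = ∑ i ∈ Finset.Ico k (r + 1), (Finset.univ.filter fun j => (h j).val = i).card := by
  rw [Finset.card_eq_sum_card_fiberwise
      (f := fun j => (h j).val) (t := Finset.Ico k (r + 1)) ?_]
  · apply Finset.sum_congr rfl
    intro i hi
    congr 1
    ext j
    simp only [Finset.mem_filter, Finset.mem_univ, true_and, Finset.mem_Ico] at hi ⊢
    omega
  · intro j hj
    simp only [Finset.mem_coe, Finset.mem_filter] at hj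
    exact Finset.mem_Ico.2 ⟨hj.2, ZMod.val_lt _⟩

lemma neg_succ_cast (u : ℕ) (hu : u ≤ r) :
    -((u : ZMod (r + 1)) + 1) = ((r - u : ℕ) : ZMod (r + 1)) := by
  have h0 : ((u : ZMod (r + 1)) + 1) + ((r - u : ℕ) : ZMod (r + 1)) = 0 := by
    rw [Nat.cast_sub hu]
    have hrr : ((r : ZMod (r + 1)) + 1) = 0 := by
      have := ZMod.natCast_self (r + 1)
      push_cast at this
      linear_combination this
    linear_combination hrr
  linear_combination -h0

lemma sum_neg_eq_filter (h : Fin r → ZMod (r + 1)) (t : ℕ) (ht : t ≤ r + 1) :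
    ∑ u ∈ Finset.range t, cnt h (-((u : ZMod (r + 1)) + 1))
      = (Finset.univ.filter fun j => r + 1 - t ≤ (h j).val).card := by
  rw [filter_val_ge]
  refine Finset.sum_nbij' (fun u => r - u) (fun i => r - i) ?_ ?_ ?_ ?_ ?_
  · intro u hu
    simp only [Finset.mem_range] at hu
    show r - u ∈ Finset.Ico (r + 1 - t) (r + 1)
    exact Finset.mem_Ico.2 ⟨by omega, by omega⟩
  · intro i hi
    simp only [Finset.mem_Ico] at hi
    show r - i ∈ Finset.range t
    exact Finset.mem_range.2 (by omega)
  · intro u hu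
    simp only [Finset.mem_range] at hu
    show r - (r - u) = u
    omega
  · intro i hi
    simp only [Finset.mem_Ico] at hi
    show r - (r - i) = i
    omega
  · intro u hu
    simp only [Finset.mem_range] at hu
    show cnt h (-((u : ZMod (r + 1)) + 1))
        = (Finset.univ.filter fun j => (h j).val = r - u).card
    rw [neg_succ_cast u (by omega), cnt_val h (r - u) (by omega)]

lemma Sg_window (g : Fin r → ZMod (r + 1)) (c : ZMod (r + 1)) (t : ℕ) (ht : t ≤ r + 1) :
    Sg g (c.val + t) < Sg g c.val ↔
      (Finset.univ.filter fun j => r + 1 - t ≤ (g j + c).val).card < t := by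
  have hIco : ∑ u ∈ Finset.Ico c.val (c.val + t), cnt g (-((u : ZMod (r + 1)) + 1))
      = (Finset.univ.filter fun j => r + 1 - t ≤ (g j + c).val).card := by
    rw [Finset.sum_Ico_eq_sum_range]
    simp only [add_tsub_cancel_left]
    rw [← sum_neg_eq_filter (fun j => g j + c) t ht]
    apply Finset.sum_congr rfl
    intro i _
    unfold cnt
    congr 1
    ext j
    simp only [Finset.mem_filter, Finset.mem_univ, true_and]
    have hcv : ((c.val : ℕ) : ZMod (r + 1)) = c := ZMod.natCast_zmod_val c
    constructor
    · intro H
      have : ((c.val + i : ℕ) : ZMod (r + 1)) = c + (i : ZMod (r + 1)) := by push_cast [hcv]; ring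
      rw [this] at H
      linear_combination H
    · intro H
      have : ((c.val + i : ℕ) : ZMod (r + 1)) = c + (i : ZMod (r + 1)) := by push_cast [hcv]; ring
      rw [this]
      linear_combination H
  unfold Sg
  rw [Finset.range_eq_Ico,
    ← Finset.sum_Ico_consecutive _ (Nat.zero_le c.val) (Nat.le_add_right c.val t),
    ← Finset.range_eq_Ico, hIco]
  push_cast
  omega

/-- The parking property, phrased for `ZMod (r+1)`-valued functions. -/
def Pk (r : ℕ) (h : Fin r → ZMod (r + 1)) : Prop :=
  ∀ k, 1 ≤ k → k ≤ r → (Finset.univ.filter fun j => k ≤ (h j).val).card ≤ r - k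

lemma shift_iff (hr : 1 ≤ r) (g : Fin r → ZMod (r + 1)) (c : ZMod (r + 1)) :
    (∀ k, 1 ≤ k → k ≤ r →
        (Finset.univ.filter fun j => k ≤ (g j + c).val).card ≤ r - k)
      ↔ ∀ t, 1 ≤ t → t ≤ r + 1 → Sg g (c.val + t) < Sg g c.val := by
  constructor
  · intro H t ht1 ht
    rw [Sg_window g c t ht]
    rcases eq_or_lt_of_le ht with h | h
    · have hle : (Finset.univ.filter fun j => r + 1 - t ≤ (g j + c).val).card ≤ r := by
        calc (Finset.univ.filter fun j => r + 1 - t ≤ (g j + c).val).card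
            ≤ (Finset.univ : Finset (Fin r)).card := Finset.card_filter_le _ _
          _ = r := by simp
      omega
    · have hk := H (r + 1 - t) (by omega) (by omega)
      omega
  · intro H k hk1 hkr
    have h1 := H (r + 1 - k) (by omega) (by omega)
    rw [Sg_window g c _ (by omega)] at h1
    rw [show r + 1 - (r + 1 - k) = k by omega] at h1
    omega

lemma exists_unique_shift (hr : 1 ≤ r) (g : Fin r → ZMod (r + 1)) :
    ∃! c : ZMod (r + 1), Pk r (fun j => g j + c) := by
  obtain ⟨c', ⟨hc'n, hc'⟩, huniq⟩ := cycle_lemma (r + 1) (by omega) (Sg g) (Sg_shift g)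
  refine ⟨(c' : ZMod (r + 1)), ?_, ?_⟩
  · show ∀ k, 1 ≤ k → k ≤ r →
        (Finset.univ.filter fun j => k ≤ (g j + (c' : ZMod (r + 1))).val).card ≤ r - k
    rw [shift_iff hr g _, ZMod.val_cast_of_lt hc'n]
    exact hc'
  · intro c hc
    have hc2 : ∀ k, 1 ≤ k → k ≤ r →
        (Finset.univ.filter fun j => k ≤ (g j + c).val).card ≤ r - k := hc
    rw [shift_iff hr g c] at hc2
    have h1 := huniq c.val ⟨ZMod.val_lt c, hc2⟩
    rw [← h1]
    exact (ZMod.natCast_zmod_val c).symm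

lemma card_park (hr : 1 ≤ r) :
    Nat.card {h : Fin r → ZMod (r + 1) // Pk r h} = (r + 1) ^ (r - 1) := by
  have hbij : Function.Bijective
      (fun p : {h : Fin r → ZMod (r + 1) // Pk r h} × ZMod (r + 1) =>
        (fun j => p.1.1 j + p.2 : Fin r → ZMod (r + 1))) := by
    constructor
    · rintro ⟨⟨h, ph⟩, c⟩ ⟨⟨h', ph'⟩, c'⟩ heq
      simp only at heq
      set g : Fin r → ZMod (r + 1) := fun j => h j + c with hg
      have hg' : ∀ j, g j = h' j + c' := fun j => congrFun heq j
      obtain ⟨c₀, _, huniq⟩ := exists_unique_shift hr g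
      have e1 : (-c) = c₀ := by
        apply huniq
        show Pk r fun j => g j + (-c)
        have he : (fun j => g j + (-c)) = h := by funext j; rw [hg]; ring
        rw [he]; exact ph
      have e2 : (-c') = c₀ := by
        apply huniq
        show Pk r fun j => g j + (-c')
        have he : (fun j => g j + (-c')) = h' := by funext j; rw [hg' j]; ring
        rw [he]; exact ph'
      have hcc : c = c' := by
        have := e1.trans e2.symm
        linear_combination -this
      subst hcc
      have hhh : h = h' := by
        funext j
        have := hg' j
        rw [hg] at this
        linear_combination this
      subst hhh
      rfl
    · intro g
      obtain ⟨c, hc, _⟩ := exists_unique_shift hr g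
      refine ⟨⟨⟨fun j => g j + c, hc⟩, -c⟩, ?_⟩
      funext j
      simp only
      ring
  have h1 : Nat.card ({h : Fin r → ZMod (r + 1) // Pk r h} × ZMod (r + 1))
      = Nat.card (Fin r → ZMod (r + 1)) := Nat.card_eq_of_bijective _ hbij
  rw [Nat.card_prod, Nat.card_fun] at h1
  have h2 : Nat.card (ZMod (r + 1)) = r + 1 := by
    rw [Nat.card_eq_fintype_card, ZMod.card]
  have h3 : Nat.card (Fin r) = r := by simp
  rw [h2, h3] at h1
  have h4 : (r + 1) ^ r = (r + 1) ^ (r - 1) * (r + 1) := by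
    rw [← pow_succ]
    congr 1
    omega
  rw [h4] at h1
  exact Nat.eq_of_mul_eq_mul_right (by omega) h1

end Stmt6Aux

theorem stmt6 (r : ℕ) (hr : 1 ≤ r) :
    Nat.card {f : Fin r → ℕ //
      (∀ j, 1 ≤ f j ∧ f j ≤ r) ∧
      (∀ k : ℕ, 1 ≤ k → k ≤ r →
        k ≤ (Finset.univ.filter (fun j => f j ≤ k)).card)} = (r + 1) ^ (r - 1) := by
  rw [← Stmt6Aux.card_park hr]
  apply Nat.card_eq_of_bijective
    (f := fun f : {f : Fin r → ℕ //
      (∀ j, 1 ≤ f j ∧ f j ≤ r) ∧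
      (∀ k : ℕ, 1 ≤ k → k ≤ r →
        k ≤ (Finset.univ.filter (fun j => f j ≤ k)).card)} =>
      (⟨fun j => ((f.1 j - 1 : ℕ) : ZMod (r + 1)), by
        intro k hk1 hkr
        show (Finset.univ.filter
            fun j => k ≤ (((f.1 j - 1 : ℕ) : ZMod (r + 1))).val).card ≤ r - k
        have hval : ∀ j, (((f.1 j - 1 : ℕ) : ZMod (r + 1))).val = f.1 j - 1 :=
          fun j => ZMod.val_cast_of_lt (by have := f.2.1 j; omega)
        have hfe : (Finset.univ.filter fun j => k ≤ (((f.1 j - 1 : ℕ) : ZMod (r + 1))).val)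
            = Finset.univ.filter fun j => ¬ f.1 j ≤ k := by
          ext j
          simp only [Finset.mem_filter, Finset.mem_univ, true_and, hval j]
          have := f.2.1 j
          omega
        rw [hfe]
        have hsplit := Finset.card_filter_add_card_filter_not
          (s := (Finset.univ : Finset (Fin r))) (p := fun j => f.1 j ≤ k)
        have hcond := f.2.2 k hk1 hkr
        have huniv : (Finset.univ : Finset (Fin r)).card = r := by simp
        omega⟩ : {h : Fin r → ZMod (r + 1) // Stmt6Aux.Pk r h}))
  constructor
  · rintro ⟨f, hf⟩ ⟨f', hf'⟩ heq
    simp only [Subtype.mk.injEq] at heq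
    apply Subtype.ext
    funext j
    show f j = f' j
    have h1 : ((f j - 1 : ℕ) : ZMod (r + 1)) = ((f' j - 1 : ℕ) : ZMod (r + 1)) :=
      congrFun (congrArg Subtype.val heq) j
    have hv : (((f j - 1 : ℕ) : ZMod (r + 1))).val = (((f' j - 1 : ℕ) : ZMod (r + 1))).val := by
      rw [h1]
    rw [ZMod.val_cast_of_lt (by have := hf.1 j; omega),
      ZMod.val_cast_of_lt (by have := hf'.1 j; omega)] at hv
    have hv2 : f j - 1 = f' j - 1 := hv
    have := hf.1 j
    have := hf'.1 j
    omega
  · rintro ⟨h, ph⟩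
    have hlt : ∀ j, (h j).val < r := by
      intro j
      by_contra hcon
      push_neg at hcon
      have := ph r hr le_rfl
      have hmem : j ∈ Finset.univ.filter fun j => r ≤ (h j).val :=
        Finset.mem_filter.2 ⟨Finset.mem_univ _, hcon⟩
      have := Finset.card_pos.2 ⟨j, hmem⟩
      omega
    refine ⟨⟨fun j => (h j).val + 1,
      ⟨fun j => ⟨by show 1 ≤ (h j).val + 1; omega,
        by show (h j).val + 1 ≤ r; have := hlt j; omega⟩, ?_⟩⟩, ?_⟩
    · intro k hk1 hkr
      show k ≤ (Finset.univ.filter fun j => (h j).val + 1 ≤ k).card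
      have hk := ph k hk1 hkr
      have hfe : (Finset.univ.filter fun j => k ≤ (h j).val)
          = Finset.univ.filter fun j => ¬ ((h j).val + 1 ≤ k) := by
        ext j
        simp only [Finset.mem_filter, Finset.mem_univ, true_and]
        omega
      rw [hfe] at hk
      have hsplit := Finset.card_filter_add_card_filter_not
        (s := (Finset.univ : Finset (Fin r))) (p := fun j => (h j).val + 1 ≤ k)
      have huniv : (Finset.univ : Finset (Fin r)).card = r := by simp
      omega
    · apply Subtype.ext
      funext j
      show ((((h j).val + 1) - 1 : ℕ) : ZMod (r + 1)) = h j
      rw [show (h j).val + 1 - 1 = (h j).val from rfl]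
      exact ZMod.natCast_zmod_val (h j)
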